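/- Let s and t be positive integers with s dividing t, and let ζ_s be a primitive s-th root of unity in the cyclotomic field Q(ζ_t). Then the field trace Tr_{Q(ζ_t)/Q}(ζ_s) equals μ(s) · φ(t)/φ(s), where μ is the Möbius function and φ is Euler's totient function. -/

import Mathlib

open Polynomial Finset IntermediateField

lemma sum_moebius_divisors_aux (n : ℕ) :
    (∑ d ∈ n.divisors, (ArithmeticFunction.moebius d : ℤ)) = if n = 1 then 1 else 0 := by
  have h : (ArithmeticFunction.moebius * ArithmeticFunction.zeta : ArithmeticFunction ℤ) n
      = (1 : ArithmeticFunction ℤ) n := by rw [ArithmeticFunction.moebius_mul_coe_zeta]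
  rwa [ArithmeticFunction.coe_mul_zeta_apply, ArithmeticFunction.one_apply] at h

lemma nextCoeff_X_pow_sub_one_aux (n : ℕ) (hn : 0 < n) :
    (X ^ n - 1 : ℚ[X]).nextCoeff = if n = 1 then -1 else 0 := by
  have hdeg : (X ^ n - 1 : ℚ[X]).natDegree = n := by
    simpa using natDegree_X_pow_sub_C (n := n) (r := (1 : ℚ))
  have hpos : 0 < (X ^ n - 1 : ℚ[X]).natDegree := by rw [hdeg]; exact hn
  rw [nextCoeff_of_natDegree_pos hpos, hdeg]
  rw [coeff_sub, coeff_X_pow, coeff_one]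
  rcases eq_or_ne n 1 with h1 | h1
  · simp [h1]
  · have h2 : 2 ≤ n := by omega
    have : n - 1 ≠ n := by omega
    have : n - 1 ≠ 0 := by omega
    simp_all

lemma nextCoeff_cyclotomic_aux (n : ℕ) (hn : 0 < n) :
    (cyclotomic n ℚ).nextCoeff = -((ArithmeticFunction.moebius n : ℤ) : ℚ) := by
  induction n using Nat.strong_induction_on with
  | _ n ih =>
  have key : ∑ d ∈ n.divisors, (cyclotomic d ℚ).nextCoeff
      = (X ^ n - 1 : ℚ[X]).nextCoeff := by
    rw [← prod_cyclotomic_eq_X_pow_sub_one hn ℚ,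
      Polynomial.Monic.nextCoeff_prod _ _ (fun i _ => cyclotomic.monic i ℚ)]
  have hself : n ∉ n.properDivisors := Nat.self_notMem_properDivisors
  rw [← Nat.insert_self_properDivisors hn.ne', Finset.sum_insert hself] at key
  have hproper : ∑ d ∈ n.properDivisors, (cyclotomic d ℚ).nextCoeff
      = ∑ d ∈ n.properDivisors, -((ArithmeticFunction.moebius d : ℤ) : ℚ) := by
    refine Finset.sum_congr rfl fun d hd => ?_
    have hdlt : d < n := (Nat.mem_properDivisors.1 hd).2
    have hdpos : 0 < d := Nat.pos_of_mem_properDivisors hd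
    exact ih d hdlt hdpos
  rw [hproper, nextCoeff_X_pow_sub_one_aux n hn] at key
  have hsum : (∑ d ∈ n.divisors, (ArithmeticFunction.moebius d : ℤ))
      = if n = 1 then 1 else 0 := sum_moebius_divisors_aux n
  rw [← Nat.insert_self_properDivisors hn.ne', Finset.sum_insert hself] at hsum
  have hsum' : ((ArithmeticFunction.moebius n : ℤ) : ℚ)
      + ∑ d ∈ n.properDivisors, ((ArithmeticFunction.moebius d : ℤ) : ℚ)
      = if n = 1 then 1 else 0 := by
    have := congrArg (fun z : ℤ => (z : ℚ)) hsum
    push_cast at this ⊢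
    simpa using this
  have : ∑ d ∈ n.properDivisors, -((ArithmeticFunction.moebius d : ℤ) : ℚ)
      = ((ArithmeticFunction.moebius n : ℤ) : ℚ) - (if n = 1 then 1 else 0) := by
    rw [Finset.sum_neg_distrib]
    have : (∑ d ∈ n.properDivisors, ((ArithmeticFunction.moebius d : ℤ) : ℚ))
        = (if n = 1 then 1 else 0) - ((ArithmeticFunction.moebius n : ℤ) : ℚ) := by
      linarith [hsum']
    rw [this]; ring
  rw [this] at key
  rcases eq_or_ne n 1 with h1 | h1 <;> simp [h1] at key ⊢ <;> linarith [key]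

theorem trace_primitive_root_eq_moebius_mul_totient_div
    (s t : ℕ+) (hst : (s : ℕ) ∣ (t : ℕ))
    (ζ : CyclotomicField t ℚ) (hζ : IsPrimitiveRoot ζ (s : ℕ)) :
    Algebra.trace ℚ (CyclotomicField t ℚ) ζ =
      ((ArithmeticFunction.moebius (s : ℕ) : ℤ) : ℚ) *
        (((t : ℕ).totient : ℚ) / ((s : ℕ).totient : ℚ)) := by
  have hs : 0 < (s : ℕ) := s.pos
  haveI : NeZero (t : ℕ) := ⟨t.ne_zero⟩
  have : IsCyclotomicExtension {(t : ℕ)} ℚ (CyclotomicField t ℚ) := by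
    convert CyclotomicField.isCyclotomicExtension (t : ℕ) ℚ
    · rfl
    · exact Subsingleton.elim _ _
  haveI : FiniteDimensional ℚ (CyclotomicField t ℚ) :=
    IsCyclotomicExtension.finiteDimensional {(t : ℕ)} ℚ (CyclotomicField t ℚ)
  have hint : IsIntegral ℚ ζ := (IsIntegral.of_finite ℚ ζ)
  have hmin : minpoly ℚ ζ = cyclotomic (s : ℕ) ℚ :=
    (cyclotomic_eq_minpoly_rat hζ hs).symm
  -- trace over the adjoin
  rw [trace_eq_trace_adjoin ℚ ζ]
  have hgen : Algebra.trace ℚ ℚ⟮ζ⟯ (IntermediateField.AdjoinSimple.gen ℚ ζ)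
      = ((ArithmeticFunction.moebius (s : ℕ) : ℤ) : ℚ) := by
    rw [← IntermediateField.adjoin.powerBasis_gen hint,
]
    erw [PowerBasis.trace_gen_eq_nextCoeff_minpoly]
    erw [IntermediateField.adjoin.powerBasis_gen hint]
    have : minpoly ℚ (IntermediateField.AdjoinSimple.gen ℚ ζ) = minpoly ℚ ζ := by
      rw [← minpoly.algebraMap_eq (algebraMap ℚ⟮ζ⟯ (CyclotomicField t ℚ)).injective,
        IntermediateField.AdjoinSimple.algebraMap_gen]
    rw [this, hmin, nextCoeff_cyclotomic_aux (s : ℕ) hs, neg_neg]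
  erw [hgen]
  -- compute the finrank
  have hLrank : Module.finrank ℚ (CyclotomicField t ℚ) = (t : ℕ).totient :=
    IsCyclotomicExtension.finrank (CyclotomicField t ℚ) (cyclotomic.irreducible_rat t.pos)
  have hKrank : Module.finrank ℚ ℚ⟮ζ⟯ = (s : ℕ).totient := by
    rw [IntermediateField.adjoin.finrank hint, hmin, natDegree_cyclotomic]
  have hmul : Module.finrank ℚ ℚ⟮ζ⟯ * Module.finrank ℚ⟮ζ⟯ (CyclotomicField t ℚ) = Module.finrank ℚ (CyclotomicField t ℚ) :=
    Module.finrank_mul_finrank ℚ ℚ⟮ζ⟯ (CyclotomicField t ℚ)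
  have hspos : 0 < (s : ℕ).totient := Nat.totient_pos.2 hs
  have hfr : (Module.finrank ℚ⟮ζ⟯ (CyclotomicField t ℚ) : ℚ)
      = ((t : ℕ).totient : ℚ) / ((s : ℕ).totient : ℚ) := by
    rw [hKrank, hLrank] at hmul
    field_simp
    exact_mod_cast (mul_comm ((s:ℕ).totient) (Module.finrank ℚ⟮ζ⟯ (CyclotomicField t ℚ)) ▸ hmul)
  rw [nsmul_eq_mul, hfr]
  ring
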